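/- Let H_SE and H_C be finite-dimensional Hilbert spaces, U a unitary on H_SE ⊗ H_C, ρ_SE a density operator on H_SE, and ω_C a density operator on H_C. If U (ρ_SE ⊗ ω_C) U† = σ_SE ⊗ ω_C for some density operator σ_SE on H_SE, then there exists a unitary V on H_SE with σ_SE = V ρ_SE V†. -/

import Mathlib

open Matrix Kronecker
open scoped ComplexOrder

/-- A density operator: positive semidefinite with unit trace. -/
def IsDensity {ι : Type*} [Fintype ι] (A : Matrix ι ι ℂ) : Prop :=
  A.PosSemidef ∧ A.trace = 1

/-- Multisets of reals with equal power sums are equal. -/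
lemma multiset_eq_of_powsum (s t : Multiset ℝ)
    (h : ∀ k : ℕ, (s.map (· ^ k)).sum = (t.map (· ^ k)).sum) : s = t := by
  classical
  set A : Finset ℝ := (s + t).toFinset with hA
  have hsub_s : s.toFinset ⊆ A := by
    intro a ha; simp only [hA, Multiset.mem_toFinset, Multiset.mem_add] at *; exact Or.inl ha
  have hsub_t : t.toFinset ⊆ A := by
    intro a ha; simp only [hA, Multiset.mem_toFinset, Multiset.mem_add] at *; exact Or.inr ha
  have hexp : ∀ (u : Multiset ℝ), u.toFinset ⊆ A → ∀ k : ℕ,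
      (u.map (· ^ k)).sum = ∑ a ∈ A, (u.count a : ℝ) * a ^ k := by
    intro u hu k
    rw [Finset.sum_multiset_map_count]
    rw [Finset.sum_subset hu]
    · simp [nsmul_eq_mul]
    · intro x _ hx
      simp [Multiset.count_eq_zero_of_notMem (by simpa using hx)]
  have key : ∀ a ∈ A, ((s.count a : ℝ) - t.count a) = 0 := by
    intro a ha
    -- Vandermonde argument
    set r := A.card with hr
    set φ : Fin r ≃ A := A.equivFin.symm with hφ
    set w : Fin r → ℝ := fun i => (φ i : ℝ) with hw
    have hwinj : Function.Injective w := by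
      intro i j hij
      exact φ.injective (Subtype.ext hij)
    set c : Fin r → ℝ := fun i => (s.count (w i) : ℝ) - t.count (w i) with hc
    have hzero : ∀ k : ℕ, ∑ i : Fin r, w i ^ k * c i = 0 := by
      intro k
      have h1 := hexp s hsub_s k
      have h2 := hexp t hsub_t k
      have : ∑ a ∈ A, ((s.count a : ℝ) - t.count a) * a ^ k = 0 := by
        simp only [sub_mul, Finset.sum_sub_distrib, ← h1, ← h2, h k, sub_self]
      calc ∑ i : Fin r, w i ^ k * c i
          = ∑ x : A, ((s.count (x : ℝ) : ℝ) - t.count (x : ℝ)) * (x : ℝ) ^ k := by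
            rw [← Equiv.sum_comp φ]; exact Finset.sum_congr rfl (by intros; ring)
        _ = ∑ a ∈ A, ((s.count a : ℝ) - t.count a) * a ^ k :=
            Finset.sum_coe_sort A (fun a => ((s.count a : ℝ) - t.count a) * a ^ k)
        _ = 0 := this
    have hMv : (Matrix.vandermonde w)ᵀ *ᵥ c = 0 := by
      funext k
      simpa [Matrix.mulVec, dotProduct, Matrix.vandermonde] using hzero (k : ℕ)
    have hdet : ((Matrix.vandermonde w)ᵀ).det ≠ 0 := by
      rw [Matrix.det_transpose, Matrix.det_vandermonde]
      refine Finset.prod_ne_zero_iff.2 fun i _ => Finset.prod_ne_zero_iff.2 fun j hj => ?_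
      have : i < j := Finset.mem_Ioi.1 hj
      exact sub_ne_zero.2 fun hEq => (this.ne (hwinj hEq.symm)).elim
    have hinj : Function.Injective ((Matrix.vandermonde w)ᵀ).mulVec :=
      Matrix.mulVec_injective_iff_isUnit.2 ((Matrix.isUnit_iff_isUnit_det _).2
        (isUnit_iff_ne_zero.2 hdet))
    have hc0 : c = 0 := hinj (by rw [hMv, Matrix.mulVec_zero])
    have : c (φ.symm ⟨a, ha⟩) = 0 := by rw [hc0]; rfl
    simpa [hc, hw] using this
  have : ∀ a : ℝ, s.count a = t.count a := by
    intro a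
    by_cases ha : a ∈ A
    · have := key a ha
      have : (s.count a : ℝ) = t.count a := by linarith
      exact_mod_cast this
    · simp only [hA, Multiset.mem_toFinset, Multiset.mem_add, not_or] at ha
      rw [Multiset.count_eq_zero_of_notMem ha.1, Multiset.count_eq_zero_of_notMem ha.2]
  exact Multiset.ext.2 this

lemma exists_perm_comp {n : ℕ} (f g : Fin n → ℝ)
    (h : Multiset.map f Finset.univ.val = Multiset.map g Finset.univ.val) :
    ∃ e : Equiv.Perm (Fin n), g = f ∘ e := by
  have hco : ∀ u : Fin n → ℝ, (↑(List.ofFn u) : Multiset ℝ) = Multiset.map u Finset.univ.val := by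
    intro u
    rw [List.ofFn_eq_map]
    rfl
  have hperm : (List.ofFn (f ∘ Tuple.sort f)).Perm (List.ofFn (g ∘ Tuple.sort g)) := by
    refine ((Tuple.sort f).ofFn_comp_perm f).trans ?_
    refine List.Perm.trans ?_ ((Tuple.sort g).ofFn_comp_perm g).symm
    rw [← Multiset.coe_eq_coe, hco, hco, h]
  have heq : List.ofFn (f ∘ Tuple.sort f) = List.ofFn (g ∘ Tuple.sort g) :=
    List.Perm.eq_of_sortedLE (Tuple.monotone_sort f).sortedLE_ofFn
      (Tuple.monotone_sort g).sortedLE_ofFn hperm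
  have heq2 : f ∘ Tuple.sort f = g ∘ Tuple.sort g := by
    have := List.ofFn_injective heq
    exact this
  refine ⟨(Tuple.sort g).symm.trans (Tuple.sort f), ?_⟩
  funext i
  have := congrFun heq2 ((Tuple.sort g).symm i)
  simpa using this.symm

variable {N : Type*} [Fintype N] [DecidableEq N]

lemma conj_pow_aux (U X : Matrix N N ℂ) (hU : Uᴴ * U = 1) (k : ℕ) :
    (U * X * Uᴴ) ^ k = U * X ^ k * Uᴴ ∨ k = 0 := by
  rcases Nat.eq_zero_or_pos k with h | h
  · exact Or.inr h
  left
  induction k with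
  | zero => omega
  | succ k ih =>
    rcases Nat.eq_zero_or_pos k with hk | hk
    · subst hk; simp [pow_one]
    · rw [pow_succ, ih hk, pow_succ]
      calc U * X ^ k * Uᴴ * (U * X * Uᴴ) = U * X ^ k * (Uᴴ * U) * X * Uᴴ := by
            simp only [Matrix.mul_assoc]
        _ = U * (X ^ k * X) * Uᴴ := by rw [hU]; simp only [Matrix.mul_assoc, Matrix.mul_one]
        _ = U * (X ^ k * X) * Uᴴ := rfl

lemma trace_conj_pow (U X : Matrix N N ℂ) (hU : Uᴴ * U = 1) (k : ℕ) (hk : 1 ≤ k) :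
    ((U * X * Uᴴ) ^ k).trace = (X ^ k).trace := by
  rcases conj_pow_aux U X hU k with h | h
  · rw [h, Matrix.trace_mul_cycle, hU, Matrix.one_mul]
  · omega

lemma kron_pow {M : Type*} [Fintype M] [DecidableEq M] (A : Matrix N N ℂ) (B : Matrix M M ℂ)
    (k : ℕ) : (A ⊗ₖ B) ^ k = (A ^ k) ⊗ₖ (B ^ k) := by
  induction k with
  | zero => simp [Matrix.one_kronecker_one]
  | succ k ih => rw [pow_succ, ih, pow_succ, pow_succ, Matrix.mul_kronecker_mul]

lemma trace_pow_hermitian {A : Matrix N N ℂ} (hA : A.IsHermitian) (k : ℕ) (hk : 1 ≤ k) :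
    (A ^ k).trace = ∑ i, (hA.eigenvalues i : ℂ) ^ k := by
  conv_lhs => rw [hA.spectral_theorem]
  rw [Unitary.conjStarAlgAut_apply, Matrix.star_eq_conjTranspose]
  rw [trace_conj_pow _ _ (by
    rw [← Matrix.star_eq_conjTranspose]
    exact (Matrix.mem_unitaryGroup_iff').mp (hA.eigenvectorUnitary).2) k hk]
  rw [Matrix.diagonal_pow, Matrix.trace_diagonal]
  simp [Function.comp]

lemma perm_diag (e : Equiv.Perm N) (d : N → ℂ) :
    (e.permMatrix ℂ) * Matrix.diagonal d * (e.permMatrix ℂ)ᴴ = Matrix.diagonal (d ∘ e) := by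
  have hH : (e.permMatrix ℂ)ᴴ = (e.permMatrix ℂ)ᵀ := by
    ext i j
    simp [Equiv.Perm.permMatrix, PEquiv.toMatrix, Matrix.conjTranspose_apply, apply_ite]
  rw [hH, ← PEquiv.toMatrix_symm, ← Equiv.toPEquiv_symm]
  rw [PEquiv.toMatrix_toPEquiv_mul, PEquiv.mul_toMatrix_toPEquiv]
  ext i j
  by_cases h : i = j <;> simp [Matrix.submatrix_apply, Matrix.diagonal_apply, h,
    Equiv.eq_symm_apply]

lemma perm_unitary (e : Equiv.Perm N) : e.permMatrix ℂ ∈ Matrix.unitaryGroup N ℂ := by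
  rw [Matrix.mem_unitaryGroup_iff']
  have hH : star (e.permMatrix ℂ) = (e.permMatrix ℂ)ᵀ := by
    ext i j
    simp [Equiv.Perm.permMatrix, PEquiv.toMatrix, Matrix.conjTranspose_apply, apply_ite]
  rw [hH, ← PEquiv.toMatrix_symm, ← Equiv.toPEquiv_symm, ← PEquiv.toMatrix_trans]
  rw [← Equiv.toPEquiv_trans]
  simp

/-- **Basic lemma of catalysis.** If a unitary on `H_SE ⊗ H_C` maps `ρ_SE ⊗ ω_C` to
`σ_SE ⊗ ω_C`, then `σ_SE` is unitarily equivalent to `ρ_SE`. -/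
theorem catalysis_basic_lemma {n m : ℕ}
    (U : Matrix (Fin n × Fin m) (Fin n × Fin m) ℂ)
    (hU : U ∈ Matrix.unitaryGroup (Fin n × Fin m) ℂ)
    (ρSE σSE : Matrix (Fin n) (Fin n) ℂ) (ωC : Matrix (Fin m) (Fin m) ℂ)
    (hρ : IsDensity ρSE) (hσ : IsDensity σSE) (hω : IsDensity ωC)
    (h : U * (ρSE ⊗ₖ ωC) * Uᴴ = σSE ⊗ₖ ωC) :
    ∃ V : Matrix (Fin n) (Fin n) ℂ,
      V ∈ Matrix.unitaryGroup (Fin n) ℂ ∧ σSE = V * ρSE * Vᴴ := by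
  classical
  have hρH : ρSE.IsHermitian := hρ.1.1
  have hσH : σSE.IsHermitian := hσ.1.1
  have hωH : ωC.IsHermitian := hω.1.1
  set lam := hρH.eigenvalues with hlam
  set kap := hσH.eigenvalues with hkap
  set mu := hωH.eigenvalues with hmu
  have hUU : Uᴴ * U = 1 := by
    rw [← Matrix.star_eq_conjTranspose]; exact (Matrix.mem_unitaryGroup_iff').mp hU
  -- traces of powers agree
  have htr : ∀ k : ℕ, 1 ≤ k →
      (∑ i, (kap i : ℂ) ^ k) * (∑ j, (mu j : ℂ) ^ k)
        = (∑ i, (lam i : ℂ) ^ k) * (∑ j, (mu j : ℂ) ^ k) := by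
    intro k hk
    have h1 : ((σSE ⊗ₖ ωC) ^ k).trace = ((ρSE ⊗ₖ ωC) ^ k).trace := by
      rw [← h]; exact trace_conj_pow U (ρSE ⊗ₖ ωC) hUU k hk
    rw [kron_pow, kron_pow, Matrix.trace_kronecker, Matrix.trace_kronecker,
      trace_pow_hermitian hσH k hk, trace_pow_hermitian hρH k hk,
      trace_pow_hermitian hωH k hk] at h1
    exact h1
  -- trace of ω powers is nonzero
  have hmu_nonneg : ∀ j, 0 ≤ mu j := fun j => hω.1.eigenvalues_nonneg j
  have hmu_sum : ∑ j, mu j = 1 := by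
    have h1 := trace_pow_hermitian hωH 1 le_rfl
    rw [pow_one] at h1
    rw [hω.2] at h1
    have : ((1 : ℝ) : ℂ) = ((∑ j, mu j : ℝ) : ℂ) := by push_cast; simpa using h1
    exact_mod_cast this.symm
  have hmu_ne : ∀ k : ℕ, (∑ j, (mu j : ℂ) ^ k) ≠ 0 := by
    intro k
    have hex : ∃ j, 0 < mu j := by
      by_contra hc
      push_neg at hc
      have : ∑ j, mu j = 0 := Finset.sum_eq_zero fun j _ =>
        le_antisymm (hc j) (hmu_nonneg j)
      rw [hmu_sum] at this; norm_num at this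
    obtain ⟨j, hj⟩ := hex
    have hpos : 0 < ∑ j, mu j ^ k :=
      Finset.sum_pos' (fun i _ => pow_nonneg (hmu_nonneg i) k)
        ⟨j, Finset.mem_univ j, pow_pos hj k⟩
    have : (∑ j, (mu j : ℂ) ^ k) = ((∑ j, mu j ^ k : ℝ) : ℂ) := by push_cast; ring
    rw [this]
    exact_mod_cast hpos.ne'
  -- power sums of eigenvalues agree over ℝ
  have hps : ∀ k : ℕ, ∑ i, kap i ^ k = ∑ i, lam i ^ k := by
    intro k
    rcases Nat.eq_zero_or_pos k with hk | hk
    · subst hk; simp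
    have := mul_right_cancel₀ (hmu_ne k) (htr k hk)
    have h2 : ((∑ i, kap i ^ k : ℝ) : ℂ) = ((∑ i, lam i ^ k : ℝ) : ℂ) := by
      push_cast; simpa using this
    exact_mod_cast h2
  -- multisets of eigenvalues agree
  have hms : Multiset.map lam Finset.univ.val = Multiset.map kap Finset.univ.val := by
    refine multiset_eq_of_powsum _ _ (fun k => ?_)
    rw [Multiset.map_map, Multiset.map_map]
    exact (hps k).symm
  obtain ⟨e, he⟩ := exists_perm_comp lam kap hms
  -- build the unitary
  set Wρ : Matrix (Fin n) (Fin n) ℂ := (hρH.eigenvectorUnitary : Matrix (Fin n) (Fin n) ℂ)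
  set Wσ : Matrix (Fin n) (Fin n) ℂ := (hσH.eigenvectorUnitary : Matrix (Fin n) (Fin n) ℂ)
  set P : Matrix (Fin n) (Fin n) ℂ := e.permMatrix ℂ
  refine ⟨Wσ * P * Wρᴴ, ?_, ?_⟩
  · refine mul_mem (mul_mem hσH.eigenvectorUnitary.2 (perm_unitary e)) ?_
    rw [← Matrix.star_eq_conjTranspose]
    exact Unitary.star_mem hρH.eigenvectorUnitary.2
  · have hdiag : Matrix.diagonal (Complex.ofReal ∘ kap)
        = P * Matrix.diagonal (Complex.ofReal ∘ lam) * Pᴴ := by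
      rw [perm_diag, he]
      rfl
    have hdρ : Matrix.diagonal (Complex.ofReal ∘ lam) = Wρᴴ * ρSE * Wρ := by
      rw [← Matrix.star_eq_conjTranspose]
      exact hρH.conjStarAlgAut_star_eigenvectorUnitary.symm.trans
        (Unitary.conjStarAlgAut_star_apply (S := ℂ) _ _)
    calc σSE = Wσ * Matrix.diagonal (Complex.ofReal ∘ kap) * star Wσ :=
          hσH.spectral_theorem
      _ = Wσ * (P * (Wρᴴ * ρSE * Wρ) * Pᴴ) * Wσᴴ := by
          rw [hdiag, hdρ, Matrix.star_eq_conjTranspose]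
      _ = (Wσ * P * Wρᴴ) * ρSE * (Wσ * P * Wρᴴ)ᴴ := by
          simp only [Matrix.conjTranspose_mul, Matrix.conjTranspose_conjTranspose,
            Matrix.mul_assoc]
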